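/- Let ξ₁, …, ξ_n be i.i.d. Uniform(0,1) with empirical distribution function H_n and let m ∈ (0,1) with k = mn an integer. Suppose (F_x^{-1})_{x∈𝒳} is a family of quantile functions with uniform modulus of continuity ω(u) ≤ κ·u^{1/b} for constants κ > 0, b ≥ 1. Then S_n := sup_{x∈𝒳} |F_x^{-1}(H_n^{-1}(m)) − F_x^{-1}(m)| satisfies P(S_n > ε) ≤ 2·exp(−(3n/5)·(ε/κ)^{2b}) for all sufficiently small ε > 0; in particular S_n = o_P((log n / n)^{1/(2b)}). -/

import Mathlib

open MeasureTheory ProbabilityTheory Real Finset Filter Topology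

set_option linter.unusedSectionVars false
set_option linter.unusedVariables false
set_option maxHeartbeats 1000000

lemma exp_small {l : ℝ} (h0 : 0 ≤ l) (h1 : l ≤ 1/4) :
    Real.exp l ≤ 1 + l + (5/9)*l^2 := by
  have h := Real.exp_bound (x := l) (by rw [abs_of_nonneg h0]; linarith) (n := 3) (by norm_num)
  rw [abs_of_nonneg h0] at h
  simp [Finset.sum_range_succ, Nat.factorial] at h
  have h2 := (abs_sub_le_iff.1 h).1
  nlinarith [pow_nonneg h0 2, pow_nonneg h0 3]

lemma exp_neg_small {l : ℝ} (h0 : 0 ≤ l) (h1 : l ≤ 1/4) :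
    Real.exp (-l) ≤ 1 - l + l^2/2 := by
  have habs : |(-l)| ≤ 1 := by rw [abs_neg, abs_of_nonneg h0]; linarith
  have h := Real.exp_bound (x := -l) habs (n := 4) (by norm_num)
  rw [abs_neg, abs_of_nonneg h0] at h
  simp [Finset.sum_range_succ, Nat.factorial] at h
  have h2 := (abs_sub_le_iff.1 h).1
  nlinarith [pow_nonneg h0 2, pow_nonneg h0 3, pow_nonneg h0 4]

lemma mgf_indicator {Ω : Type*} [MeasurableSpace Ω] (μ : Measure Ω) [IsProbabilityMeasure μ]
    (p : Ω → Prop) [DecidablePred p] (hA : MeasurableSet {ω | p ω}) (l : ℝ) :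
    mgf (fun ω => if p ω then (1:ℝ) else 0) μ l
      = 1 + (μ {ω | p ω}).toReal * (Real.exp l - 1) := by
  have hpt : ∀ ω, Real.exp (l * (if p ω then (1:ℝ) else 0))
      = ({ω | p ω}).indicator (fun _ => Real.exp l - 1) ω + 1 := by
    intro ω
    by_cases h : p ω <;> simp [h, Set.indicator, Real.exp_zero]
  rw [mgf]
  simp only [hpt]
  rw [integral_add ((integrable_const (Real.exp l - 1)).indicator hA) (integrable_const 1),
    integral_indicator_const _ hA]
  simp only [integral_const, measure_univ, ENNReal.toReal_one, smul_eq_mul, one_smul, Measure.real]; ring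

section Core
variable {Ω : Type*} [MeasurableSpace Ω] (μ : Measure Ω) [IsProbabilityMeasure μ]

lemma core_chernoff (W : ℕ → Ω → ℝ) (hWm : ∀ i, Measurable (W i))
    (hind : iIndepFun W μ)
    (hW01 : ∀ i ω, W i ω = 0 ∨ W i ω = 1)
    (r : ℝ) (hr0 : 0 ≤ r)
    (hmgf : ∀ i l, mgf (W i) μ l = 1 + r * (Real.exp l - 1))
    (n : ℕ) (l a c : ℝ) (hl : 0 ≤ l)
    (hexp : -l * a + n * (r * (Real.exp l - 1)) ≤ c) :
    (μ {ω | a ≤ ∑ i ∈ Finset.range n, W i ω}).toReal ≤ Real.exp c := by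
  have hint : ∀ i ∈ Finset.range n, Integrable (fun ω => Real.exp (l * W i ω)) μ := by
    intro i _
    refine (integrable_const (max 1 (Real.exp l))).mono'
      (((hWm i).const_mul l).exp.aestronglyMeasurable) (Filter.Eventually.of_forall fun ω => ?_)
    rcases hW01 i ω with h | h <;>
      simp [h, abs_of_nonneg (Real.exp_pos _).le, le_max_left, le_max_right]
  have hset : {ω | a ≤ ∑ i ∈ Finset.range n, W i ω}
      = {ω | a ≤ (∑ i ∈ Finset.range n, W i) ω} := by
    ext ω; simp [Finset.sum_apply]
  have key := measure_ge_le_exp_mul_mgf (μ := μ) (X := ∑ i ∈ Finset.range n, W i) a hl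
    (hind.integrable_exp_mul_sum hWm hint)
  rw [hind.mgf_sum hWm] at key
  rw [hset]
  refine key.trans ?_
  have h1x : (0:ℝ) ≤ 1 + r * (Real.exp l - 1) := by
    nlinarith [Real.add_one_le_exp l, Real.exp_pos l]
  calc Real.exp (-l * a) * ∏ i ∈ Finset.range n, mgf (W i) μ l
      = Real.exp (-l * a) * (1 + r * (Real.exp l - 1)) ^ n := by
        simp [hmgf, Finset.prod_const]
    _ ≤ Real.exp (-l * a) * (Real.exp (r * (Real.exp l - 1))) ^ n := by
        gcongr
        exact Real.add_one_le_exp _ |>.trans_eq' (by ring_nf)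
    _ = Real.exp (-l * a + n * (r * (Real.exp l - 1))) := by
        rw [← Real.exp_nat_mul, ← Real.exp_add]
    _ ≤ Real.exp c := Real.exp_le_exp.2 hexp

lemma coreA (W : ℕ → Ω → ℝ) (hWm : ∀ i, Measurable (W i))
    (hind : iIndepFun W μ)
    (hW01 : ∀ i ω, W i ω = 0 ∨ W i ω = 1)
    (r : ℝ) (hr0 : 0 ≤ r) (hr : r ≤ 1/2)
    (hmgf : ∀ i l, mgf (W i) μ l = 1 + r * (Real.exp l - 1))
    (n : ℕ) (t : ℝ) (ht0 : 0 < t) (ht8 : t ≤ 1/8) :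
    (μ {ω | (n:ℝ)*r + n*t ≤ ∑ i ∈ Finset.range n, W i ω}).toReal
      ≤ Real.exp (-(3/5)*n*t^2) := by
  refine core_chernoff μ W hWm hind hW01 r hr0 hmgf n (2*t) _ _ (by linarith) ?_
  have he : Real.exp (2*t) ≤ 1 + 2*t + (5/9)*(2*t)^2 := exp_small (by linarith) (by linarith)
  have hn0 : (0:ℝ) ≤ (n:ℝ) := Nat.cast_nonneg n
  have hunit : -(2*t) * (r + t) + r * (Real.exp (2*t) - 1) ≤ -(3/5)*t^2 := by
    nlinarith [mul_le_mul_of_nonneg_right hr (sq_nonneg t),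
      mul_le_mul_of_nonneg_left (by nlinarith : Real.exp (2*t) - 1 ≤ 2*t + (20/9)*t^2) hr0]
  nlinarith [mul_le_mul_of_nonneg_left hunit hn0]

lemma coreB (W : ℕ → Ω → ℝ) (hWm : ∀ i, Measurable (W i))
    (hind : iIndepFun W μ)
    (hW01 : ∀ i ω, W i ω = 0 ∨ W i ω = 1)
    (r : ℝ) (hr0 : 0 ≤ r) (hr : r ≤ 1/2)
    (hmgf : ∀ i l, mgf (W i) μ l = 1 + r * (Real.exp l - 1))
    (n : ℕ) (t : ℝ) (ht0 : 0 < t) (ht8 : t ≤ 1/8) :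
    (μ {ω | ∑ i ∈ Finset.range n, W i ω ≤ (n:ℝ)*r - n*t}).toReal
      ≤ Real.exp (-(3/5)*n*t^2) := by
  -- lower tail via Chernoff with negative parameter
  have hint : ∀ i ∈ Finset.range n, Integrable (fun ω => Real.exp ((-(2*t)) * W i ω)) μ := by
    intro i _
    refine (integrable_const (max 1 (Real.exp (-(2*t))))).mono'
      (((hWm i).const_mul _).exp.aestronglyMeasurable) (Filter.Eventually.of_forall fun ω => ?_)
    rcases hW01 i ω with h | h <;>
      simp [h, abs_of_nonneg (Real.exp_pos _).le, le_max_left, le_max_right]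
  have hset : {ω | ∑ i ∈ Finset.range n, W i ω ≤ (n:ℝ)*r - n*t}
      = {ω | (∑ i ∈ Finset.range n, W i) ω ≤ (n:ℝ)*r - n*t} := by
    ext ω; simp [Finset.sum_apply]
  have key := measure_le_le_exp_mul_mgf (μ := μ) (X := ∑ i ∈ Finset.range n, W i)
    ((n:ℝ)*r - n*t) (t := -(2*t)) (by linarith)
    (hind.integrable_exp_mul_sum hWm hint)
  rw [hind.mgf_sum hWm] at key
  rw [hset]
  refine key.trans ?_
  have h1x : (0:ℝ) ≤ 1 + r * (Real.exp (-(2*t)) - 1) := by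
    nlinarith [Real.add_one_le_exp (-(2*t)), Real.exp_pos (-(2*t)), (Real.exp_le_one_iff.2 (by linarith : -(2*t) ≤ 0))]
  calc Real.exp (-(-(2*t)) * ((n:ℝ)*r - n*t)) * ∏ i ∈ Finset.range n, mgf (W i) μ (-(2*t))
      = Real.exp ((2*t) * ((n:ℝ)*r - n*t)) * (1 + r * (Real.exp (-(2*t)) - 1)) ^ n := by
        simp [hmgf, Finset.prod_const]
    _ ≤ Real.exp ((2*t) * ((n:ℝ)*r - n*t)) * (Real.exp (r * (Real.exp (-(2*t)) - 1))) ^ n := by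
        gcongr
        exact Real.add_one_le_exp _ |>.trans_eq' (by ring_nf)
    _ = Real.exp ((2*t) * ((n:ℝ)*r - n*t) + n * (r * (Real.exp (-(2*t)) - 1))) := by
        rw [← Real.exp_nat_mul, ← Real.exp_add]
    _ ≤ Real.exp (-(3/5)*n*t^2) := by
        apply Real.exp_le_exp.2
        have he : Real.exp (-(2*t)) ≤ 1 - 2*t + (2*t)^2/2 := exp_neg_small (by linarith) (by linarith)
        have hn0 : (0:ℝ) ≤ (n:ℝ) := Nat.cast_nonneg n
        have hunit : (2*t) * (r - t) + r * (Real.exp (-(2*t)) - 1) ≤ -(3/5)*t^2 := by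
          nlinarith [mul_le_mul_of_nonneg_right hr (sq_nonneg t),
            mul_le_mul_of_nonneg_left (by nlinarith : Real.exp (-(2*t)) - 1 ≤ -2*t + 2*t^2) hr0]
        nlinarith [mul_le_mul_of_nonneg_left hunit hn0]
end Core

section Tails
variable {Ω : Type*} [MeasurableSpace Ω] (μ : Measure Ω) [IsProbabilityMeasure μ]
    (ξ : ℕ → Ω → ℝ) (hmeas : ∀ i, Measurable (ξ i))
    (hid : ∀ i, Measure.map (ξ i) μ = volume.restrict (Set.Ioo (0:ℝ) 1))
    (hindep : iIndepFun ξ μ)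

include hmeas hid in
lemma prob_le (i : ℕ) (u : ℝ) (hu0 : 0 < u) (hu1 : u < 1) :
    μ {ω | ξ i ω ≤ u} = ENNReal.ofReal u := by
  have h1 : {ω | ξ i ω ≤ u} = ξ i ⁻¹' (Set.Iic u) := rfl
  rw [h1, ← Measure.map_apply (hmeas i) measurableSet_Iic, hid i,
    Measure.restrict_apply measurableSet_Iic]
  have h2 : Set.Iic u ∩ Set.Ioo (0:ℝ) 1 = Set.Ioc 0 u := by
    ext x
    simp only [Set.mem_inter_iff, Set.mem_Iic, Set.mem_Ioo, Set.mem_Ioc]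
    exact ⟨fun ⟨a, c, _⟩ => ⟨c, a⟩, fun ⟨c, a⟩ => ⟨a, c, lt_of_le_of_lt a hu1⟩⟩
  rw [h2, Real.volume_Ioc, sub_zero]

include hmeas hid in
lemma prob_gt (i : ℕ) (u : ℝ) (hu0 : 0 < u) (hu1 : u < 1) :
    μ {ω | u < ξ i ω} = ENNReal.ofReal (1 - u) := by
  have h1 : {ω | u < ξ i ω} = ξ i ⁻¹' (Set.Ioi u) := rfl
  rw [h1, ← Measure.map_apply (hmeas i) measurableSet_Ioi, hid i,
    Measure.restrict_apply measurableSet_Ioi]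
  have h2 : Set.Ioi u ∩ Set.Ioo (0:ℝ) 1 = Set.Ioo u 1 := by
    ext x
    simp only [Set.mem_inter_iff, Set.mem_Ioi, Set.mem_Ioo]
    exact ⟨fun ⟨a, _, c⟩ => ⟨a, c⟩, fun ⟨a, c⟩ => ⟨a, hu0.trans a, c⟩⟩
  rw [h2, Real.volume_Ioo]

include hmeas hid hindep in
lemma tail_upper (n : ℕ) (u t : ℝ) (hu0 : 0 < u) (hu1 : u < 1)
    (ht0 : 0 < t) (ht8 : t ≤ 1/8) :
    μ {ω | (n:ℝ)*u + n*t ≤ ∑ i ∈ Finset.range n, (if ξ i ω ≤ u then (1:ℝ) else 0)}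
      ≤ ENNReal.ofReal (Real.exp (-(3/5)*n*t^2)) := by
  by_cases hu : u ≤ 1/2
  · set W : ℕ → Ω → ℝ := fun i ω => if ξ i ω ≤ u then (1:ℝ) else 0 with hW
    have hWm : ∀ i, Measurable (W i) := fun i =>
      Measurable.ite ((hmeas i) measurableSet_Iic) measurable_const measurable_const
    have hind : iIndepFun W μ :=
      hindep.comp (fun _ x => if x ≤ u then (1:ℝ) else 0)
        (fun _ => Measurable.ite measurableSet_Iic measurable_const measurable_const)
    have hW01 : ∀ i ω, W i ω = 0 ∨ W i ω = 1 := by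
      intro i ω; by_cases h : ξ i ω ≤ u <;> simp [hW, h]
    have hmgf : ∀ i l, mgf (W i) μ l = 1 + u * (Real.exp l - 1) := by
      intro i l
      rw [hW]
      rw [mgf_indicator μ (fun ω => ξ i ω ≤ u) ((hmeas i) measurableSet_Iic) l,
        prob_le μ ξ hmeas hid i u hu0 hu1, ENNReal.toReal_ofReal hu0.le]
    have h := coreA μ W hWm hind hW01 u hu0.le hu hmgf n t ht0 ht8
    calc μ _ = ENNReal.ofReal (μ {ω | (n:ℝ)*u + n*t ≤ ∑ i ∈ Finset.range n, W i ω}).toReal :=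
          (ENNReal.ofReal_toReal (measure_ne_top μ _)).symm
      _ ≤ _ := ENNReal.ofReal_le_ofReal h
  · push_neg at hu
    set W : ℕ → Ω → ℝ := fun i ω => if u < ξ i ω then (1:ℝ) else 0 with hW
    have hWm : ∀ i, Measurable (W i) := fun i =>
      Measurable.ite ((hmeas i) measurableSet_Ioi) measurable_const measurable_const
    have hind : iIndepFun W μ :=
      hindep.comp (fun _ x => if u < x then (1:ℝ) else 0)
        (fun _ => Measurable.ite measurableSet_Ioi measurable_const measurable_const)
    have hW01 : ∀ i ω, W i ω = 0 ∨ W i ω = 1 := by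
      intro i ω; by_cases h : u < ξ i ω <;> simp [hW, h]
    have hmgf : ∀ i l, mgf (W i) μ l = 1 + (1-u) * (Real.exp l - 1) := by
      intro i l
      rw [hW]
      rw [mgf_indicator μ (fun ω => u < ξ i ω) ((hmeas i) measurableSet_Ioi) l,
        prob_gt μ ξ hmeas hid i u hu0 hu1, ENNReal.toReal_ofReal (by linarith)]
    have hflip : ∀ ω, ∑ i ∈ Finset.range n, (if ξ i ω ≤ u then (1:ℝ) else 0)
        = n - ∑ i ∈ Finset.range n, W i ω := by
      intro ω
      have : ∀ i, (if ξ i ω ≤ u then (1:ℝ) else 0) = 1 - W i ω := by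
        intro i; by_cases h : ξ i ω ≤ u
        · simp [hW, h, not_lt.2 h]
        · simp [hW, h, not_le.1 h]
      simp [this, Finset.sum_sub_distrib]
    have hset : {ω | (n:ℝ)*u + n*t ≤ ∑ i ∈ Finset.range n, (if ξ i ω ≤ u then (1:ℝ) else 0)}
        = {ω | ∑ i ∈ Finset.range n, W i ω ≤ (n:ℝ)*(1-u) - n*t} := by
      ext ω
      simp only [Set.mem_setOf_eq, hflip ω]
      constructor <;> intro h <;> linarith
    rw [hset]
    have h := coreB μ W hWm hind hW01 (1-u) (by linarith) (by linarith) hmgf n t ht0 ht8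
    calc μ _ = ENNReal.ofReal (μ {ω | ∑ i ∈ Finset.range n, W i ω ≤ (n:ℝ)*(1-u) - n*t}).toReal :=
          (ENNReal.ofReal_toReal (measure_ne_top μ _)).symm
      _ ≤ _ := ENNReal.ofReal_le_ofReal h

include hmeas hid hindep in
lemma tail_lower (n : ℕ) (u t : ℝ) (hu0 : 0 < u) (hu1 : u < 1)
    (ht0 : 0 < t) (ht8 : t ≤ 1/8) :
    μ {ω | ∑ i ∈ Finset.range n, (if ξ i ω ≤ u then (1:ℝ) else 0) ≤ (n:ℝ)*u - n*t}
      ≤ ENNReal.ofReal (Real.exp (-(3/5)*n*t^2)) := by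
  by_cases hu : u ≤ 1/2
  · set W : ℕ → Ω → ℝ := fun i ω => if ξ i ω ≤ u then (1:ℝ) else 0 with hW
    have hWm : ∀ i, Measurable (W i) := fun i =>
      Measurable.ite ((hmeas i) measurableSet_Iic) measurable_const measurable_const
    have hind : iIndepFun W μ :=
      hindep.comp (fun _ x => if x ≤ u then (1:ℝ) else 0)
        (fun _ => Measurable.ite measurableSet_Iic measurable_const measurable_const)
    have hW01 : ∀ i ω, W i ω = 0 ∨ W i ω = 1 := by
      intro i ω; by_cases h : ξ i ω ≤ u <;> simp [hW, h]
    have hmgf : ∀ i l, mgf (W i) μ l = 1 + u * (Real.exp l - 1) := by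
      intro i l
      rw [hW]
      rw [mgf_indicator μ (fun ω => ξ i ω ≤ u) ((hmeas i) measurableSet_Iic) l,
        prob_le μ ξ hmeas hid i u hu0 hu1, ENNReal.toReal_ofReal hu0.le]
    have h := coreB μ W hWm hind hW01 u hu0.le hu hmgf n t ht0 ht8
    calc μ _ = ENNReal.ofReal (μ {ω | ∑ i ∈ Finset.range n, W i ω ≤ (n:ℝ)*u - n*t}).toReal :=
          (ENNReal.ofReal_toReal (measure_ne_top μ _)).symm
      _ ≤ _ := ENNReal.ofReal_le_ofReal h
  · push_neg at hu
    set W : ℕ → Ω → ℝ := fun i ω => if u < ξ i ω then (1:ℝ) else 0 with hW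
    have hWm : ∀ i, Measurable (W i) := fun i =>
      Measurable.ite ((hmeas i) measurableSet_Ioi) measurable_const measurable_const
    have hind : iIndepFun W μ :=
      hindep.comp (fun _ x => if u < x then (1:ℝ) else 0)
        (fun _ => Measurable.ite measurableSet_Ioi measurable_const measurable_const)
    have hW01 : ∀ i ω, W i ω = 0 ∨ W i ω = 1 := by
      intro i ω; by_cases h : u < ξ i ω <;> simp [hW, h]
    have hmgf : ∀ i l, mgf (W i) μ l = 1 + (1-u) * (Real.exp l - 1) := by
      intro i l
      rw [hW]
      rw [mgf_indicator μ (fun ω => u < ξ i ω) ((hmeas i) measurableSet_Ioi) l,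
        prob_gt μ ξ hmeas hid i u hu0 hu1, ENNReal.toReal_ofReal (by linarith)]
    have hflip : ∀ ω, ∑ i ∈ Finset.range n, (if ξ i ω ≤ u then (1:ℝ) else 0)
        = n - ∑ i ∈ Finset.range n, W i ω := by
      intro ω
      have : ∀ i, (if ξ i ω ≤ u then (1:ℝ) else 0) = 1 - W i ω := by
        intro i; by_cases h : ξ i ω ≤ u
        · simp [hW, h, not_lt.2 h]
        · simp [hW, h, not_le.1 h]
      simp [this, Finset.sum_sub_distrib]
    have hset : {ω | ∑ i ∈ Finset.range n, (if ξ i ω ≤ u then (1:ℝ) else 0) ≤ (n:ℝ)*u - n*t}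
        = {ω | (n:ℝ)*(1-u) + n*t ≤ ∑ i ∈ Finset.range n, W i ω} := by
      ext ω
      simp only [Set.mem_setOf_eq, hflip ω]
      constructor <;> intro h <;> linarith
    rw [hset]
    have h := coreA μ W hWm hind hW01 (1-u) (by linarith) (by linarith) hmgf n t ht0 ht8
    calc μ _ = ENNReal.ofReal (μ {ω | (n:ℝ)*(1-u) + n*t ≤ ∑ i ∈ Finset.range n, W i ω}).toReal :=
          (ENNReal.ofReal_toReal (measure_ne_top μ _)).symm
      _ ≤ _ := ENNReal.ofReal_le_ofReal h
end Tails

section Quantile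
variable (n : ℕ) (hn : 0 < n) (x : ℕ → ℝ) (k : ℕ) (hk1 : 1 ≤ k) (hkn : k ≤ n)

lemma count_mono {s s' : ℝ} (h : s ≤ s') :
    ∑ i ∈ range n, (if x i ≤ s then (1:ℝ) else 0)
      ≤ ∑ i ∈ range n, (if x i ≤ s' then (1:ℝ) else 0) := by
  refine Finset.sum_le_sum fun i _ => ?_
  by_cases hi : x i ≤ s
  · simp [hi, hi.trans h]
  · by_cases hi' : x i ≤ s' <;> simp [hi, hi']

include hn hk1 hkn in
lemma quantile_nonempty_bdd :
    ({t : ℝ | (k:ℝ) ≤ ∑ i ∈ range n, (if x i ≤ t then (1:ℝ) else 0)}.Nonempty) ∧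
    BddBelow {t : ℝ | (k:ℝ) ≤ ∑ i ∈ range n, (if x i ≤ t then (1:ℝ) else 0)} := by
  have hne : (range n).Nonempty := nonempty_range_iff.2 hn.ne'
  constructor
  · refine ⟨(range n).sup' hne x, ?_⟩
    have : ∀ i ∈ range n, (if x i ≤ (range n).sup' hne x then (1:ℝ) else 0) = 1 := by
      intro i hi; simp [Finset.le_sup' x hi]
    simp only [Set.mem_setOf_eq, Finset.sum_congr rfl this, Finset.sum_const,
      Finset.card_range, nsmul_eq_mul, mul_one]
    exact_mod_cast hkn
  · refine ⟨(range n).inf' hne x, fun t ht => ?_⟩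
    simp only [Set.mem_setOf_eq] at ht
    by_contra hlt
    push_neg at hlt
    have hz : ∀ i ∈ range n, (if x i ≤ t then (1:ℝ) else 0) = 0 := by
      intro i hi
      have : ¬ x i ≤ t := fun hle => absurd (le_trans (Finset.inf'_le x hi) hle) (not_le.2 hlt)
      simp [this]
    rw [Finset.sum_congr rfl hz, Finset.sum_const, smul_zero] at ht
    have : (1:ℝ) ≤ (k:ℝ) := by exact_mod_cast hk1
    linarith

include hn hk1 hkn in
lemma quantile_le_iff (s : ℝ) :
    sInf {t : ℝ | (k:ℝ) ≤ ∑ i ∈ range n, (if x i ≤ t then (1:ℝ) else 0)} ≤ s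
      ↔ (k:ℝ) ≤ ∑ i ∈ range n, (if x i ≤ s then (1:ℝ) else 0) := by
  obtain ⟨hne, hbdd⟩ := quantile_nonempty_bdd n hn x k hk1 hkn
  constructor
  · intro h
    by_contra hns
    push_neg at hns
    set F := (range n).filter (fun i => ¬ x i ≤ s) with hF
    have hFne : F.Nonempty := by
      by_contra hFe
      rw [Finset.not_nonempty_iff_eq_empty] at hFe
      have hall : ∀ i ∈ range n, x i ≤ s := by
        intro i hi
        by_contra hxi
        have : i ∈ F := Finset.mem_filter.2 ⟨hi, hxi⟩
        simp [hFe] at this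
      have : ∀ i ∈ range n, (if x i ≤ s then (1:ℝ) else 0) = 1 := fun i hi => by
        simp [hall i hi]
      rw [Finset.sum_congr rfl this, Finset.sum_const, Finset.card_range, nsmul_eq_mul,
        mul_one] at hns
      exact absurd (by exact_mod_cast hkn : (k:ℝ) ≤ (n:ℝ)) (not_le.2 hns)
    set c := F.inf' hFne x with hc
    have hsc : s < c := by
      rw [hc, Finset.lt_inf'_iff]
      intro i hi
      exact not_le.1 (Finset.mem_filter.1 hi).2
    have hlb : ∀ t ∈ {t : ℝ | (k:ℝ) ≤ ∑ i ∈ range n, (if x i ≤ t then (1:ℝ) else 0)}, c ≤ t := by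
      intro t ht
      simp only [Set.mem_setOf_eq] at ht
      by_contra htc
      push_neg at htc
      have hcount : ∑ i ∈ range n, (if x i ≤ t then (1:ℝ) else 0)
          ≤ ∑ i ∈ range n, (if x i ≤ s then (1:ℝ) else 0) := by
        refine Finset.sum_le_sum fun i hi => ?_
        by_cases hxt : x i ≤ t
        · have hxs : x i ≤ s := by
            by_contra hxs
            have hiF : i ∈ F := Finset.mem_filter.2 ⟨hi, hxs⟩
            exact absurd (le_trans (Finset.inf'_le x hiF) hxt) (not_le.2 htc)
          simp [hxt, hxs]
        · by_cases hxs : x i ≤ s <;> simp [hxt, hxs]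
      linarith
    have : c ≤ sInf {t : ℝ | (k:ℝ) ≤ ∑ i ∈ range n, (if x i ≤ t then (1:ℝ) else 0)} :=
      le_csInf hne hlb
    linarith
  · intro h
    exact csInf_le hbdd h

include hn hk1 hkn in
lemma quantile_mem_Ioo (hx : ∀ i < n, x i ∈ Set.Ioo (0:ℝ) 1) :
    sInf {t : ℝ | (k:ℝ) ≤ ∑ i ∈ range n, (if x i ≤ t then (1:ℝ) else 0)} ∈ Set.Ioo (0:ℝ) 1 := by
  obtain ⟨hne, hbdd⟩ := quantile_nonempty_bdd n hn x k hk1 hkn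
  have hner : (range n).Nonempty := nonempty_range_iff.2 hn.ne'
  constructor
  · have hlb : ∀ t ∈ {t : ℝ | (k:ℝ) ≤ ∑ i ∈ range n, (if x i ≤ t then (1:ℝ) else 0)},
        (range n).inf' hner x ≤ t := by
      intro t ht
      simp only [Set.mem_setOf_eq] at ht
      by_contra hlt
      push_neg at hlt
      have hz : ∀ i ∈ range n, (if x i ≤ t then (1:ℝ) else 0) = 0 := by
        intro i hi
        have : ¬ x i ≤ t := fun hle => absurd (le_trans (Finset.inf'_le x hi) hle) (not_le.2 hlt)
        simp [this]
      rw [Finset.sum_congr rfl hz, Finset.sum_const, smul_zero] at ht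
      have : (1:ℝ) ≤ (k:ℝ) := by exact_mod_cast hk1
      linarith
    have h1 : (0:ℝ) < (range n).inf' hner x := by
      rw [Finset.lt_inf'_iff]
      intro i hi
      exact (hx i (Finset.mem_range.1 hi)).1
    exact lt_of_lt_of_le h1 (le_csInf hne hlb)
  · have hmem : (range n).sup' hner x
        ∈ {t : ℝ | (k:ℝ) ≤ ∑ i ∈ range n, (if x i ≤ t then (1:ℝ) else 0)} := by
      have : ∀ i ∈ range n, (if x i ≤ (range n).sup' hner x then (1:ℝ) else 0) = 1 := by
        intro i hi; simp [Finset.le_sup' x hi]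
      simp only [Set.mem_setOf_eq, Finset.sum_congr rfl this, Finset.sum_const,
        Finset.card_range, nsmul_eq_mul, mul_one]
      exact_mod_cast hkn
    have h2 : (range n).sup' hner x < 1 := by
      rw [Finset.sup'_lt_iff]
      intro i hi
      exact (hx i (Finset.mem_range.1 hi)).2
    exact lt_of_le_of_lt (csInf_le hbdd hmem) h2
end Quantile

theorem stmt_19 {Ω : Type*} [MeasurableSpace Ω] (μ : Measure Ω)
    [IsProbabilityMeasure μ]
    -- i.i.d. Uniform(0,1) random variables
    (ξ : ℕ → Ω → ℝ) (hmeas : ∀ i, Measurable (ξ i))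
    (hid : ∀ i, Measure.map (ξ i) μ = volume.restrict (Set.Ioo (0:ℝ) 1))
    (hindep : iIndepFun ξ μ)
    (m : ℝ) (hm0 : 0 < m) (hm1 : m < 1)
    -- a family of quantile functions with uniform modulus of continuity ≤ κ u^{1/b}
    (𝒳 : Type*) [Nonempty 𝒳] (Finv : 𝒳 → ℝ → ℝ)
    (κ : ℝ) (hκ : 0 < κ) (b : ℝ) (hb : 1 ≤ b)
    (hmod : ∀ x : 𝒳, ∀ t ∈ Set.Ioo (0:ℝ) 1, ∀ t' ∈ Set.Ioo (0:ℝ) 1,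
      |Finv x t - Finv x t'| ≤ κ * |t - t'| ^ (1 / b))
    -- empirical distribution function and empirical quantile
    (H : ℕ → Ω → ℝ → ℝ)
    (hH : ∀ n ω t, H n ω t =
      (1 / (n:ℝ)) * ∑ i ∈ Finset.range n, (if ξ i ω ≤ t then (1:ℝ) else 0))
    (Hinv : ℕ → Ω → ℝ) (hHinv : ∀ n ω, Hinv n ω = sInf {t : ℝ | m ≤ H n ω t})
    (S : ℕ → Ω → ℝ)
    (hS : ∀ n ω, S n ω = ⨆ x : 𝒳, |Finv x (Hinv n ω) - Finv x m|) :
    -- exponential deviation bound for all sufficiently small ε > 0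
    (∃ ε₀ : ℝ, 0 < ε₀ ∧ ∀ ε : ℝ, 0 < ε → ε < ε₀ → ∀ n : ℕ, 0 < n →
      (∃ k : ℕ, (k:ℝ) = m * n) →
      μ {ω | ε < S n ω} ≤
        ENNReal.ofReal (2 * Real.exp (-(3 * n / 5) * (ε / κ) ^ (2 * b)))) ∧
    -- in particular, S_n = o_P((log n / n)^{1/(2b)})
    (∀ δ : ℝ, 0 < δ → ∀ ε' : ℝ, 0 < ε' → ∃ N : ℕ, ∀ n ≥ N,
      (∃ k : ℕ, (k:ℝ) = m * n) →
      μ {ω | δ * (Real.log n / n) ^ (1 / (2 * b)) < S n ω} ≤ ENNReal.ofReal ε') := by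
  have hb0 : (0:ℝ) < b := lt_of_lt_of_le zero_lt_one hb
  set ε₀ : ℝ := κ * min m (min (1 - m) (1/8)) with hε₀def
  have hminpos : 0 < min m (min (1 - m) (1/8)) :=
    lt_min hm0 (lt_min (by linarith) (by norm_num))
  have hε₀pos : 0 < ε₀ := mul_pos hκ hminpos
  have hpart1 : ∀ ε : ℝ, 0 < ε → ε < ε₀ → ∀ n : ℕ, 0 < n →
      (∃ k : ℕ, (k:ℝ) = m * n) →
      μ {ω | ε < S n ω} ≤
        ENNReal.ofReal (2 * Real.exp (-(3 * n / 5) * (ε / κ) ^ (2 * b))) := by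
    intro ε hε hεlt n hn hkex
    obtain ⟨k, hk⟩ := hkex
    have hn' : (0:ℝ) < (n:ℝ) := by exact_mod_cast hn
    have hεκ : ε / κ < min m (min (1 - m) (1/8)) := by
      rw [div_lt_iff₀ hκ, mul_comm]; exact hεlt
    have hεκ0 : 0 < ε / κ := div_pos hε hκ
    have hεκ1 : ε / κ ≤ 1 := by
      have : min m (min (1 - m) (1/8)) ≤ 1/8 := le_trans (min_le_right _ _) (min_le_right _ _)
      linarith
    set t : ℝ := (ε / κ) ^ b with htdef
    have ht0 : 0 < t := Real.rpow_pos_of_pos hεκ0 b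
    have htle : t ≤ ε / κ := by
      have h := Real.rpow_le_rpow_of_exponent_ge hεκ0 hεκ1 hb
      rwa [Real.rpow_one] at h
    have htm : t < m := lt_of_le_of_lt htle (lt_of_lt_of_le hεκ (min_le_left _ _))
    have ht1m : t < 1 - m := lt_of_le_of_lt htle
      (lt_of_lt_of_le hεκ (le_trans (min_le_right _ _) (min_le_left _ _)))
    have ht8 : t ≤ 1/8 := le_of_lt (lt_of_le_of_lt htle
      (lt_of_lt_of_le hεκ (le_trans (min_le_right _ _) (min_le_right _ _))))
    have hk1 : 1 ≤ k := by
      have h1 : (0:ℝ) < (k:ℝ) := by rw [hk]; exact mul_pos hm0 hn'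
      have h2 : 0 < k := by exact_mod_cast h1
      omega
    have hkn : k ≤ n := by
      have : (k:ℝ) < (n:ℝ) := by rw [hk]; nlinarith
      exact_mod_cast this.le
    set Bad : Set Ω := ⋃ i, {ω | ξ i ω ∉ Set.Ioo (0:ℝ) 1} with hBaddef
    have hBad : μ Bad = 0 := by
      refine measure_iUnion_null fun i => ?_
      have h1 : {ω | ξ i ω ∉ Set.Ioo (0:ℝ) 1} = ξ i ⁻¹' (Set.Ioo (0:ℝ) 1)ᶜ := rfl
      rw [h1, ← Measure.map_apply (hmeas i) measurableSet_Ioo.compl, hid i,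
        Measure.restrict_apply measurableSet_Ioo.compl]
      simp
    set E1 : Set Ω := {ω | ∑ i ∈ Finset.range n, (if ξ i ω ≤ m + t then (1:ℝ) else 0)
        ≤ (n:ℝ)*(m+t) - n*t} with hE1def
    set E2 : Set Ω := {ω | (n:ℝ)*(m-t) + n*t
        ≤ ∑ i ∈ Finset.range n, (if ξ i ω ≤ m - t then (1:ℝ) else 0)} with hE2def
    have hsub : {ω | ε < S n ω} ⊆ Bad ∪ (E1 ∪ E2) := by
      intro ω hω
      simp only [Set.mem_setOf_eq] at hω
      by_cases hG : ω ∈ Bad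
      · exact Or.inl hG
      right
      have hGood : ∀ i, ξ i ω ∈ Set.Ioo (0:ℝ) 1 := by
        simp only [hBaddef, Set.mem_iUnion, Set.mem_setOf_eq, not_exists] at hG
        intro i; by_contra h; exact hG i h
      have hHset : {t' : ℝ | m ≤ H n ω t'}
          = {t' : ℝ | (k:ℝ) ≤ ∑ i ∈ range n, (if ξ i ω ≤ t' then (1:ℝ) else 0)} := by
        ext t'
        simp only [Set.mem_setOf_eq, hH n ω t', one_div_mul_eq_div, le_div_iff₀ hn', hk]
      have hQeq : Hinv n ω
          = sInf {t' : ℝ | (k:ℝ) ≤ ∑ i ∈ range n, (if ξ i ω ≤ t' then (1:ℝ) else 0)} := by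
        rw [hHinv n ω, hHset]
      have hiff : ∀ s : ℝ, Hinv n ω ≤ s
          ↔ (k:ℝ) ≤ ∑ i ∈ range n, (if ξ i ω ≤ s then (1:ℝ) else 0) := by
        intro s; rw [hQeq]; exact quantile_le_iff n hn (fun i => ξ i ω) k hk1 hkn s
      have hQIoo : Hinv n ω ∈ Set.Ioo (0:ℝ) 1 := by
        rw [hQeq]; exact quantile_mem_Ioo n hn (fun i => ξ i ω) k hk1 hkn (fun i _ => hGood i)
      have hSle : S n ω ≤ κ * |Hinv n ω - m| ^ (1 / b) := by
        rw [hS]; exact ciSup_le fun x => hmod x (Hinv n ω) hQIoo m ⟨hm0, hm1⟩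
      have hltS : ε < κ * |Hinv n ω - m| ^ (1 / b) := lt_of_lt_of_le hω hSle
      have habs : t < |Hinv n ω - m| := by
        have h1 : ε / κ < |Hinv n ω - m| ^ (1 / b) := by
          rw [div_lt_iff₀ hκ, mul_comm]; exact hltS
        have h2 : (ε / κ) ^ b < (|Hinv n ω - m| ^ (1 / b)) ^ b :=
          Real.rpow_lt_rpow hεκ0.le h1 hb0
        rwa [← Real.rpow_mul (abs_nonneg _), one_div_mul_cancel (ne_of_gt hb0),
          Real.rpow_one] at h2
      rcases le_or_gt m (Hinv n ω) with hc | hc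
      · -- upper deviation : E1
        have hmt : m + t < Hinv n ω := by
          rw [abs_of_nonneg (by linarith)] at habs; linarith
        have hnc : ¬ ((k:ℝ) ≤ ∑ i ∈ range n, (if ξ i ω ≤ m + t then (1:ℝ) else 0)) := by
          intro hcc
          have := (hiff (m + t)).2 hcc
          linarith
        push_neg at hnc
        left
        show ∑ i ∈ Finset.range n, (if ξ i ω ≤ m + t then (1:ℝ) else 0) ≤ (n:ℝ)*(m+t) - n*t
        have heq : (n:ℝ)*(m+t) - n*t = (k:ℝ) := by rw [hk]; ring
        linarith
      · -- lower deviation : E2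
        have hmt : Hinv n ω ≤ m - t := by
          rw [abs_of_nonpos (by linarith)] at habs; linarith
        have hcc := (hiff (m - t)).1 hmt
        right
        show (n:ℝ)*(m-t) + n*t ≤ ∑ i ∈ Finset.range n, (if ξ i ω ≤ m - t then (1:ℝ) else 0)
        have heq : (n:ℝ)*(m-t) + n*t = (k:ℝ) := by rw [hk]; ring
        linarith
    have hT1 : μ E1 ≤ ENNReal.ofReal (Real.exp (-(3/5)*n*t^2)) :=
      tail_lower μ ξ hmeas hid hindep n (m + t) t (by linarith) (by linarith) ht0 ht8
    have hT2 : μ E2 ≤ ENNReal.ofReal (Real.exp (-(3/5)*n*t^2)) :=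
      tail_upper μ ξ hmeas hid hindep n (m - t) t (by linarith) (by linarith) ht0 ht8
    have hexp_eq : -(3/5)*(n:ℝ)*t^2 = -(3 * n / 5) * (ε / κ) ^ (2 * b) := by
      have ht2 : t^2 = (ε/κ) ^ (2*b) := by
        rw [htdef, ← Real.rpow_natCast ((ε/κ) ^ b) 2, ← Real.rpow_mul hεκ0.le]
        norm_num [mul_comm]
      rw [ht2]; ring
    calc μ {ω | ε < S n ω} ≤ μ (Bad ∪ (E1 ∪ E2)) := measure_mono hsub
      _ ≤ μ Bad + μ (E1 ∪ E2) := measure_union_le _ _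
      _ = μ (E1 ∪ E2) := by rw [hBad, zero_add]
      _ ≤ μ E1 + μ E2 := measure_union_le _ _
      _ ≤ ENNReal.ofReal (Real.exp (-(3/5)*n*t^2)) + ENNReal.ofReal (Real.exp (-(3/5)*n*t^2)) :=
          add_le_add hT1 hT2
      _ = ENNReal.ofReal (2 * Real.exp (-(3 * n / 5) * (ε / κ) ^ (2 * b))) := by
          rw [← ENNReal.ofReal_add (Real.exp_pos _).le (Real.exp_pos _).le, ← hexp_eq]
          norm_num [two_mul]
  refine ⟨⟨ε₀, hε₀pos, hpart1⟩, ?_⟩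
  intro δ hδ ε' hε'
  set c : ℝ := (3/5) * (δ/κ) ^ (2*b) with hcdef
  have hcpos : 0 < c := by
    have : 0 < (δ/κ) ^ (2*b) := Real.rpow_pos_of_pos (div_pos hδ hκ) _
    positivity
  have hbase : Tendsto (fun x : ℝ => Real.log x / x) atTop (𝓝 0) := by
    have h := (isLittleO_log_rpow_atTop one_pos).tendsto_div_nhds_zero
    simpa [Real.rpow_one] using h
  have hbaseN : Tendsto (fun n : ℕ => Real.log n / n) atTop (𝓝 0) :=
    hbase.comp tendsto_natCast_atTop_atTop
  have hrpow : Tendsto (fun n : ℕ => δ * (Real.log n / n) ^ (1/(2*b))) atTop (𝓝 0) := by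
    have hcont : ContinuousAt (fun x : ℝ => x ^ (1/(2*b))) 0 :=
      Real.continuousAt_rpow_const 0 _ (Or.inr (by positivity))
    have h2 : Tendsto (fun n : ℕ => (Real.log n / n) ^ (1/(2*b))) atTop
        (𝓝 ((0:ℝ) ^ (1/(2*b)))) := (hcont.tendsto).comp hbaseN
    rw [Real.zero_rpow (by positivity)] at h2
    simpa using h2.const_mul δ
  have hexp2 : Tendsto (fun n : ℕ => 2 * Real.exp (-(c * Real.log n))) atTop (𝓝 0) := by
    have hlogN : Tendsto (fun n : ℕ => Real.log n) atTop atTop :=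
      Real.tendsto_log_atTop.comp tendsto_natCast_atTop_atTop
    have hneg : Tendsto (fun n : ℕ => -(c * Real.log n)) atTop atBot :=
      tendsto_neg_atTop_atBot.comp (hlogN.const_mul_atTop hcpos)
    have := Real.tendsto_exp_atBot.comp hneg
    simpa using this.const_mul 2
  have hev : ∀ᶠ n : ℕ in atTop,
      δ * (Real.log n / n) ^ (1/(2*b)) < ε₀ ∧
      2 * Real.exp (-(c * Real.log n)) < ε' ∧ 2 ≤ n := by
    filter_upwards [hrpow.eventually_lt_const hε₀pos, hexp2.eventually_lt_const hε',
      eventually_ge_atTop 2] with n h1 h2 h3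
    exact ⟨h1, h2, h3⟩
  obtain ⟨N, hN⟩ := eventually_atTop.1 hev
  refine ⟨N, fun n hn hkex => ?_⟩
  obtain ⟨h1, h2, h3⟩ := hN n hn
  have hn0 : 0 < n := by omega
  have hn' : (0:ℝ) < (n:ℝ) := by exact_mod_cast hn0
  have hlogpos : 0 < Real.log n := Real.log_pos (by exact_mod_cast (by omega : 1 < n))
  set εn : ℝ := δ * (Real.log n / n) ^ (1/(2*b)) with hεndef
  have hεn0 : 0 < εn := by
    have : 0 < (Real.log n / n) ^ (1/(2*b)) :=
      Real.rpow_pos_of_pos (div_pos hlogpos hn') _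
    positivity
  have hkey := hpart1 εn hεn0 h1 n hn0 hkex
  refine hkey.trans (ENNReal.ofReal_le_ofReal ?_)
  have hεnκ : (εn / κ) ^ (2*b) = (δ/κ) ^ (2*b) * (Real.log n / n) := by
    have hrw : εn / κ = (δ/κ) * (Real.log n / n) ^ (1/(2*b)) := by
      rw [hεndef]; ring
    rw [hrw, Real.mul_rpow (div_pos hδ hκ).le (Real.rpow_nonneg (div_nonneg hlogpos.le hn'.le) _),
      ← Real.rpow_mul (div_nonneg hlogpos.le hn'.le),
      one_div_mul_cancel (by positivity : (2*b) ≠ 0), Real.rpow_one]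
  have hexpeq : -(3 * (n:ℝ) / 5) * (εn / κ) ^ (2 * b) = -(c * Real.log n) := by
    rw [hεnκ, hcdef]
    field_simp
  rw [hexpeq]
  exact h2.le
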